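/- Let G = (V, E_1, …, E_k) be a multilayer graph, W its combined weighted wedge graph, and α ≥ 1. If C is a vertex cover of W whose weight is at most α times the minimum weight of a vertex cover of W, then the labelings S_i = E_i ∖ { e ∈ E_i : n_e ∈ C } each fulfill the STC for E_i and satisfy Σ_{i∈[k]} |E_i∖S_i| + d_k(S_1,…,S_k) ≤ α · OPT, where OPT is the minimum of Σ_{i∈[k]} |E_i∖S'_i| + d_k(S'_1,…,S'_k) over all families of labelings S'_i ⊆ E_i each fulfilling the STC for E_i. -/

import Mathlib

open Finset

/-- A wedge `(v, {u, w})` of an edge set `E`. -/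
def IsWedge {V : Type*} (E : Finset (Sym2 V)) (v u w : V) : Prop :=
  u ≠ v ∧ v ≠ w ∧ u ≠ w ∧ s(u, v) ∈ E ∧ s(v, w) ∈ E ∧ s(u, w) ∉ E

/-- A labeling `S ⊆ E` fulfills the strong triadic closure for `E`. -/
def FulfillsSTC {V : Type*} (E S : Finset (Sym2 V)) : Prop :=
  ∀ u v w : V, u ≠ v → v ≠ w → u ≠ w → s(u, v) ∈ S → s(v, w) ∈ S → s(u, w) ∈ E

/-- `s(e)`: the number of layers in which `e` is labeled strong. -/
def sCount {V : Type*} [DecidableEq V] {k : ℕ} (Ss : Fin k → Finset (Sym2 V))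
    (e : Sym2 V) : ℕ :=
  (Finset.univ.filter fun i => e ∈ Ss i).card

/-- `w(e)`: the number of layers in which `e` is labeled weak. -/
def wCount {V : Type*} [DecidableEq V] {k : ℕ} (Es Ss : Fin k → Finset (Sym2 V))
    (e : Sym2 V) : ℕ :=
  (Finset.univ.filter fun i => e ∈ Es i ∧ e ∉ Ss i).card

/-- `d_k(S_1, …, S_k) = ∑_{e ∈ E, w(e) > 0} s(e)`: the number of disagreements. -/
def disagree {V : Type*} [DecidableEq V] {k : ℕ} (Es Ss : Fin k → Finset (Sym2 V)) : ℕ :=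
  ∑ e ∈ (Finset.univ.biUnion Es).filter (fun e => 0 < wCount Es Ss e), sCount Ss e

/-- `C` (a set of vertices `n_e`, identified with the corresponding edges `e`) is a
vertex cover of the combined wedge graph `W` of the multilayer graph: in `W`,
`n_{uv}` and `n_{vw}` are adjacent iff `(v,{u,w})` is a wedge of some layer `E_i`,
and a vertex cover contains at least one endpoint of every edge. -/
def IsCombinedWedgeGraphVC {V : Type*} {k : ℕ} (Es : Fin k → Finset (Sym2 V))
    (C : Finset (Sym2 V)) : Prop :=
  ∀ i : Fin k, ∀ v u w : V, IsWedge (Es i) v u w → s(u, v) ∈ C ∨ s(v, w) ∈ C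

/-- The weight `w(n_e) = |{i ∈ [k] : e ∈ E_i}|` of the vertex `n_e` of the combined
weighted wedge graph. -/
def wedgeWeight {V : Type*} [DecidableEq V] {k : ℕ} (Es : Fin k → Finset (Sym2 V))
    (e : Sym2 V) : ℕ :=
  (Finset.univ.filter fun i => e ∈ Es i).card

lemma sum_sdiff_eq {V : Type*} [DecidableEq V] {k : ℕ} (Es Ss : Fin k → Finset (Sym2 V)) :
    ∑ i : Fin k, (Es i \ Ss i).card
      = ∑ e ∈ (Finset.univ.biUnion Es), wCount Es Ss e := by
  have h1 : ∀ i : Fin k, Es i \ Ss i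
      = (Finset.univ.biUnion Es).filter (fun e => e ∈ Es i ∧ e ∉ Ss i) := by
    intro i
    ext e
    simp only [mem_sdiff, mem_filter, mem_biUnion, mem_univ, true_and]
    constructor
    · rintro ⟨h1, h2⟩; exact ⟨⟨i, h1⟩, h1, h2⟩
    · rintro ⟨_, h1, h2⟩; exact ⟨h1, h2⟩
  simp only [h1, Finset.card_filter]
  rw [Finset.sum_comm]
  refine Finset.sum_congr rfl fun e _ => ?_
  rw [wCount, Finset.card_filter]

lemma weight_eq_w_add_s {V : Type*} [DecidableEq V] {k : ℕ}
    (Es Ss : Fin k → Finset (Sym2 V)) (hsub : ∀ i, Ss i ⊆ Es i) (e : Sym2 V) :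
    wedgeWeight Es e = wCount Es Ss e + sCount Ss e := by
  rw [wedgeWeight, wCount, sCount]
  have h1 : (Finset.univ.filter fun i => e ∈ Ss i)
      = (Finset.univ.filter fun i : Fin k => e ∈ Es i).filter (fun i => e ∈ Ss i) := by
    ext i
    simp only [mem_filter, mem_univ, true_and]
    exact ⟨fun h => ⟨hsub i h, h⟩, fun h => h.2⟩
  have h2 : (Finset.univ.filter fun i : Fin k => e ∈ Es i ∧ e ∉ Ss i)
      = (Finset.univ.filter fun i : Fin k => e ∈ Es i).filter (fun i => e ∉ Ss i) := by
    rw [Finset.filter_filter]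
  rw [h1, h2, add_comm]
  exact (Finset.card_filter_add_card_filter_not (fun i => e ∈ Ss i)).symm

/-- Objective value equals the weight of the induced vertex cover. -/
lemma obj_eq_weight {V : Type*} [DecidableEq V] {k : ℕ}
    (Es Ss : Fin k → Finset (Sym2 V)) (hsub : ∀ i, Ss i ⊆ Es i) :
    (∑ i : Fin k, (Es i \ Ss i).card) + disagree Es Ss
      = ∑ e ∈ (Finset.univ.biUnion Es).filter (fun e => 0 < wCount Es Ss e),
          wedgeWeight Es e := by
  rw [sum_sdiff_eq, disagree]
  have h1 : ∑ e ∈ (Finset.univ.biUnion Es), wCount Es Ss e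
      = ∑ e ∈ (Finset.univ.biUnion Es).filter (fun e => 0 < wCount Es Ss e),
          wCount Es Ss e := by
    rw [Finset.sum_filter_of_ne]
    intro e _ h
    exact Nat.pos_of_ne_zero h
  rw [h1, ← Finset.sum_add_distrib]
  exact Finset.sum_congr rfl fun e _ => (weight_eq_w_add_s Es Ss hsub e).symm

lemma induced_is_vc {V : Type*} [DecidableEq V] {k : ℕ}
    (Es Ss : Fin k → Finset (Sym2 V)) (hstc : ∀ i, FulfillsSTC (Es i) (Ss i)) :
    IsCombinedWedgeGraphVC Es
      ((Finset.univ.biUnion Es).filter (fun e => 0 < wCount Es Ss e)) := by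
  intro i v u w hw
  obtain ⟨huv, hvw, huw, h1, h2, h3⟩ := hw
  by_contra hcon
  push_neg at hcon
  obtain ⟨hc1, hc2⟩ := hcon
  have m1 : s(u,v) ∈ Ss i := by
    by_contra hm
    exact hc1 (Finset.mem_filter.mpr ⟨Finset.mem_biUnion.mpr ⟨i, Finset.mem_univ i, h1⟩,
      Finset.card_pos.mpr ⟨i, Finset.mem_filter.mpr ⟨Finset.mem_univ i, h1, hm⟩⟩⟩)
  have m2 : s(v,w) ∈ Ss i := by
    by_contra hm
    exact hc2 (Finset.mem_filter.mpr ⟨Finset.mem_biUnion.mpr ⟨i, Finset.mem_univ i, h2⟩,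
      Finset.card_pos.mpr ⟨i, Finset.mem_filter.mpr ⟨Finset.mem_univ i, h2, hm⟩⟩⟩)
  exact h3 (hstc i u v w huv hvw huw m1 m2)

theorem approx_vc_gives_approx_stc {V : Type*} [DecidableEq V] {k : ℕ}
    (Es : Fin k → Finset (Sym2 V)) (C : Finset (Sym2 V)) (α : ℝ) (hα : 1 ≤ α)
    (hCsub : C ⊆ Finset.univ.biUnion Es) (hC : IsCombinedWedgeGraphVC Es C)
    (happrox : (∑ e ∈ C, wedgeWeight Es e : ℝ) ≤
      α * (sInf {n : ℕ | ∃ C' : Finset (Sym2 V),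
        C' ⊆ Finset.univ.biUnion Es ∧ IsCombinedWedgeGraphVC Es C' ∧
        n = ∑ e ∈ C', wedgeWeight Es e} : ℕ)) :
    let Ss : Fin k → Finset (Sym2 V) := fun i => Es i \ (Es i).filter (fun e => e ∈ C)
    (∀ i, FulfillsSTC (Es i) (Ss i)) ∧
      ((∑ i : Fin k, (Es i \ Ss i).card) + disagree Es Ss : ℝ) ≤
        α * (sInf {n : ℕ | ∃ Ss' : Fin k → Finset (Sym2 V),
          (∀ i, Ss' i ⊆ Es i) ∧ (∀ i, FulfillsSTC (Es i) (Ss' i)) ∧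
          n = (∑ i : Fin k, (Es i \ Ss' i).card) + disagree Es Ss'} : ℕ) := by
  intro Ss
  have hmem : ∀ i (e : Sym2 V), e ∈ Ss i ↔ e ∈ Es i ∧ e ∉ C := by
    intro i e
    show e ∈ Es i \ (Es i).filter (fun e => e ∈ C) ↔ _
    simp only [mem_sdiff, mem_filter]
    tauto
  have hstc : ∀ i, FulfillsSTC (Es i) (Ss i) := by
    intro i u v w h1 h2 h3 m1 m2
    by_contra hE
    rcases hC i v u w ⟨h1, h2, h3, ((hmem i _).1 m1).1, ((hmem i _).1 m2).1, hE⟩ with h | h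
    · exact ((hmem i _).1 m1).2 h
    · exact ((hmem i _).1 m2).2 h
  refine ⟨hstc, ?_⟩
  have hdis : disagree Es Ss = 0 := by
    rw [disagree]
    apply Finset.sum_eq_zero
    intro e he
    rw [Finset.mem_filter] at he
    obtain ⟨_, hpos⟩ := he
    obtain ⟨i, hi⟩ := Finset.card_pos.mp hpos
    rw [Finset.mem_filter] at hi
    have heC : e ∈ C := by
      by_contra hn
      exact hi.2.2 ((hmem i e).2 ⟨hi.2.1, hn⟩)
    rw [sCount, Finset.card_eq_zero, Finset.filter_eq_empty_iff]
    intro j _ hj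
    exact ((hmem j e).1 hj).2 heC
  have hsum : ∑ i : Fin k, (Es i \ Ss i).card = ∑ e ∈ C, wedgeWeight Es e := by
    have h1 : ∀ i, Es i \ Ss i = C.filter (fun e => e ∈ Es i) := by
      intro i; ext e
      simp only [mem_sdiff, hmem, mem_filter]
      tauto
    simp only [h1, Finset.card_filter]
    rw [Finset.sum_comm]
    refine Finset.sum_congr rfl fun e _ => ?_
    rw [wedgeWeight, Finset.card_filter]
  have hBne : Set.Nonempty {n : ℕ | ∃ Ss' : Fin k → Finset (Sym2 V),
      (∀ i, Ss' i ⊆ Es i) ∧ (∀ i, FulfillsSTC (Es i) (Ss' i)) ∧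
      n = (∑ i : Fin k, (Es i \ Ss' i).card) + disagree Es Ss'} :=
    ⟨_, fun _ => (∅ : Finset (Sym2 V)), fun _ => Finset.empty_subset _,
      fun _ _ _ _ _ _ _ h1 _ => absurd h1 (Finset.notMem_empty _), rfl⟩
  obtain ⟨Ss', hsub', hstc', heq'⟩ := Nat.sInf_mem hBne
  have hAle : sInf {n : ℕ | ∃ C' : Finset (Sym2 V),
        C' ⊆ Finset.univ.biUnion Es ∧ IsCombinedWedgeGraphVC Es C' ∧
        n = ∑ e ∈ C', wedgeWeight Es e}
      ≤ sInf {n : ℕ | ∃ Ss' : Fin k → Finset (Sym2 V),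
        (∀ i, Ss' i ⊆ Es i) ∧ (∀ i, FulfillsSTC (Es i) (Ss' i)) ∧
        n = (∑ i : Fin k, (Es i \ Ss' i).card) + disagree Es Ss'} := by
    rw [heq', obj_eq_weight Es Ss' hsub']
    exact Nat.sInf_le ⟨_, Finset.filter_subset _ _, induced_is_vc Es Ss' hstc', rfl⟩
  rw [hdis, hsum]
  push_cast
  calc (∑ e ∈ C, (wedgeWeight Es e : ℝ)) + 0
      = (∑ e ∈ C, (wedgeWeight Es e : ℝ)) := by ring
    _ ≤ α * _ := happrox
    _ ≤ _ := mul_le_mul_of_nonneg_left (Nat.cast_le.mpr hAle) (le_trans zero_le_one hα)
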